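/- Fix integers M ≥ N ≥ 1, parameters t, α₀,…,α_M, γ₀,…,γ_M ∈ ℂ, and integers 1 ≤ x₁ < ⋯ < x_N = M. For nonzero z₁,…,z_N ∈ ℂ with z_j² ≠ 1 for all j and z_j z_k ≠ 1, z_j ≠ z_k for all j < k, define F^I_{M,N}(z₁,…,z_N; γ₁,…,γ_M; x₁,…,x_N) = [ ∏_{j=1}^{N}(1+tz_j²) ∏_{1≤j<k≤N}(1+tz_jz_k)(1+tz_jz_k^{-1}) ] / [ (−1)^N ∏_{j=1}^{N}(1−z_j²) ∏_{1≤j<k≤N}(1−z_jz_k)(z_jz_k^{-1}−1) ] × Σ_{σ ∈ S_N} Σ_{τ ∈ {±1}^N} sgn(σ) (−1)^{#{j : τ_j = −1}} ∏_{j=1}^{N} [ ∏_{k=0}^{x_j-1}(α_k + (1-α_kγ_k) z_{σ(j)}^{τ_{σ(j)}}) ] [ ∏_{k=x_j+1}^{M}(1 − γ_k z_{σ(j)}^{τ_{σ(j)}}) ] [ ∏_{k=1}^{M}(1 − γ_k z_{σ(j)}^{-τ_{σ(j)}}) ]. Then, with γ_M specialized to γ_M = z_N, F^I_{M,N}(z₁,…,z_N;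 γ₁,…,γ_{M-1}, z_N; x₁,…,x_N) = ∏_{j=1}^{N}(t z_N z_j + 1) · ∏_{j=1}^{N-1}(t + z_N z_j^{-1}) · ∏_{j=0}^{M-1}((1-α_jγ_j) z_N^{-1} + α_j) · ∏_{j=1}^{M-1}(1 − γ_j z_N) · F^I_{M-1,N-1}(z₁,…,z_{N-1}; γ₁,…,γ_{M-1}; x₁,…,x_{N-1}), where for N = 1 the function F^I_{M-1,0} is interpreted as 1. -/

import Mathlib

open Finset

/-- The explicit sum formula `F^I_{M,N}` (equation (55) of the paper): the product of the
type I prefactor and the generalized symplectic Schur function `sp_λ` with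
`λ_j = x_{N-j+1} - N + j - 1`.  Variables `z` and particle positions `x` are 0-indexed
(`z j`, `x j` stand for the paper's `z_{j+1}`, `x_{j+1}`); parameter families `α, γ` are
functions on `ℕ` (indices `0,…,M` are used).  The sign choice `τ` is encoded by booleans:
`τ j = true` stands for `τ_j = +1` and `τ j = false` for `τ_j = -1`. -/
noncomputable def FI (M : ℕ) (t : ℂ) (α γ : ℕ → ℂ) {N : ℕ} (x : Fin N → ℕ)
    (z : Fin N → ℂ) : ℂ :=
  ((∏ j, (1 + t * z j ^ 2)) *
      ∏ j, ∏ k ∈ Ioi j, (1 + t * z j * z k) * (1 + t * z j * (z k)⁻¹)) /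
  ((-1 : ℂ) ^ N * (∏ j, (1 - z j ^ 2)) *
      ∏ j, ∏ k ∈ Ioi j, (1 - z j * z k) * (z j * (z k)⁻¹ - 1)) *
  ∑ σ : Equiv.Perm (Fin N), ∑ τ : Fin N → Bool,
    ((Equiv.Perm.sign σ : ℤ) : ℂ) *
    (-1 : ℂ) ^ (Finset.univ.filter (fun j => τ j = false)).card *
    ∏ j,
      ((∏ k ∈ Finset.range (x j),
          (α k + (1 - α k * γ k) * (if τ (σ j) then z (σ j) else (z (σ j))⁻¹))) *
       (∏ k ∈ Finset.Icc (x j + 1) M,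
          (1 - γ k * (if τ (σ j) then z (σ j) else (z (σ j))⁻¹))) *
       (∏ k ∈ Finset.Icc 1 M,
          (1 - γ k * (if τ (σ j) then (z (σ j))⁻¹ else z (σ j)))))

noncomputable def pref (t : ℂ) {N : ℕ} (z : Fin N → ℂ) : ℂ :=
  ((∏ j, (1 + t * z j ^ 2)) *
      ∏ j, ∏ k ∈ Ioi j, (1 + t * z j * z k) * (1 + t * z j * (z k)⁻¹)) /
  ((-1 : ℂ) ^ N * (∏ j, (1 - z j ^ 2)) *
      ∏ j, ∏ k ∈ Ioi j, (1 - z j * z k) * (z j * (z k)⁻¹ - 1))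

noncomputable def Gt (M : ℕ) (α γ : ℕ → ℂ) {N : ℕ} (x : Fin N → ℕ) (z : Fin N → ℂ)
    (τ : Fin N → Bool) (j s : Fin N) : ℂ :=
  (∏ k ∈ Finset.range (x j),
      (α k + (1 - α k * γ k) * (if τ s then z s else (z s)⁻¹))) *
  (∏ k ∈ Finset.Icc (x j + 1) M,
      (1 - γ k * (if τ s then z s else (z s)⁻¹))) *
  (∏ k ∈ Finset.Icc 1 M,
      (1 - γ k * (if τ s then (z s)⁻¹ else z s)))

noncomputable def bigsum (M : ℕ) (α γ : ℕ → ℂ) {N : ℕ} (x : Fin N → ℕ) (z : Fin N → ℂ) : ℂ :=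
  ∑ σ : Equiv.Perm (Fin N), ∑ τ : Fin N → Bool,
    ((Equiv.Perm.sign σ : ℤ) : ℂ) *
    (-1 : ℂ) ^ (Finset.univ.filter (fun j => τ j = false)).card *
    ∏ j, Gt M α γ x z τ j (σ j)

lemma FI_eq (M : ℕ) (t : ℂ) (α γ : ℕ → ℂ) {N : ℕ} (x : Fin N → ℕ) (z : Fin N → ℂ) :
    FI M t α γ x z = pref t z * bigsum M α γ x z := rfl


/-- Extension of a permutation of `Fin n` to `Fin (n+1)` fixing the last element. -/
def pext (σ : Equiv.Perm (Fin n)) : Equiv.Perm (Fin (n + 1)) :=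
  (finSuccEquivLast.symm).permCongr σ.optionCongr

@[simp] lemma pext_castSucc (σ : Equiv.Perm (Fin n)) (i : Fin n) :
    pext σ i.castSucc = (σ i).castSucc := by
  simp [pext, Equiv.permCongr_apply]

@[simp] lemma pext_last (σ : Equiv.Perm (Fin n)) : pext σ (Fin.last n) = Fin.last n := by
  simp [pext, Equiv.permCongr_apply]

@[simp] lemma sign_pext (σ : Equiv.Perm (Fin n)) :
    Equiv.Perm.sign (pext σ) = Equiv.Perm.sign σ := by
  simp [pext, Equiv.Perm.sign_permCongr]

lemma sum_perm_fix_last (f : Equiv.Perm (Fin (n + 1)) → ℂ)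
    (h0 : ∀ σ, σ (Fin.last n) ≠ Fin.last n → f σ = 0) :
    ∑ σ, f σ = ∑ σ' : Equiv.Perm (Fin n), f (pext σ') := by
  classical
  set E : Equiv.Perm (Fin (n + 1)) ≃ Option (Fin n) × Equiv.Perm (Fin n) :=
    (Equiv.permCongr finSuccEquivLast).trans Equiv.Perm.decomposeOption with hE
  rw [← Equiv.sum_comp E.symm f, Fintype.sum_prod_type, Fintype.sum_option]
  have hnone : ∀ σ' : Equiv.Perm (Fin n), E.symm (none, σ') = pext σ' := by
    intro σ'
    simp [hE, pext, Equiv.Perm.decomposeOption, Equiv.swap_self, Equiv.permCongr_symm]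
    rfl
  have hsome : ∀ (i : Fin n) (σ' : Equiv.Perm (Fin n)),
      f (E.symm (some i, σ')) = 0 := by
    intro i σ'
    apply h0
    have : E.symm (some i, σ') (Fin.last n) = (i : Fin n).castSucc := by
      simp [hE, Equiv.Perm.decomposeOption, Equiv.permCongr_symm, Equiv.permCongr_apply,
        Equiv.Perm.mul_apply, Equiv.swap_apply_left]
    rw [this]
    exact (Fin.castSucc_lt_last i).ne
  simp only [hnone, hsome, Finset.sum_const_zero, add_zero]

variable {n : ℕ}

lemma sum_tau_fix_last (f : (Fin (n + 1) → Bool) → ℂ)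
    (h0 : ∀ τ, τ (Fin.last n) = true → f τ = 0) :
    ∑ τ, f τ = ∑ τ' : Fin n → Bool, f (Fin.snoc τ' false) := by
  classical
  rw [← Equiv.sum_comp (Fin.snocEquiv (fun _ => Bool)) f, Fintype.sum_prod_type,
    Fintype.sum_bool]
  have ht : ∀ τ' : Fin n → Bool, f (Fin.snocEquiv (fun _ => Bool) (true, τ')) = 0 := by
    intro τ'
    apply h0
    simp [Fin.snocEquiv]
  have hf : ∀ τ' : Fin n → Bool,
      f (Fin.snocEquiv (fun _ => Bool) (false, τ')) = f (Fin.snoc τ' false) := by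
    intro τ'; rfl
  simp only [ht, hf, Finset.sum_const_zero, zero_add]

lemma neg_one_pow_filter {N : ℕ} (τ : Fin N → Bool) :
    ((-1 : ℂ) ^ (Finset.univ.filter (fun j => τ j = false)).card) =
      ∏ j, (if τ j = false then (-1 : ℂ) else 1) := by
  rw [Finset.prod_ite, Finset.prod_const, Finset.prod_const, one_pow, mul_one]

lemma pow_card_snoc_false (τ' : Fin n → Bool) :
    ((-1 : ℂ) ^ (Finset.univ.filter
        (fun j => (Fin.snoc τ' false : Fin (n+1) → Bool) j = false)).card) =
      -(-1 : ℂ) ^ (Finset.univ.filter (fun j => τ' j = false)).card := by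
  rw [neg_one_pow_filter, neg_one_pow_filter, Fin.prod_univ_castSucc]
  simp [Fin.snoc_castSucc, Fin.snoc_last]

lemma prod_Ioi_split (g : Fin (n + 1) → Fin (n + 1) → ℂ) :
    (∏ j, ∏ k ∈ Ioi j, g j k) =
      (∏ i : Fin n, ∏ k ∈ Ioi i, g i.castSucc k.castSucc) *
        ∏ i : Fin n, g i.castSucc (Fin.last n) := by
  rw [Fin.prod_univ_castSucc]
  have hlast : (Ioi (Fin.last n) : Finset (Fin (n + 1))) = ∅ := by
    ext k
    simp [Fin.le_last k, not_lt.mpr (Fin.le_last k)]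
  rw [hlast, Finset.prod_empty, mul_one, ← Finset.prod_mul_distrib]
  refine Finset.prod_congr rfl fun i _ => ?_
  have hIoi : (Ioi i.castSucc : Finset (Fin (n + 1))) =
      insert (Fin.last n) ((Ioi i).map Fin.castSuccEmb) := by
    ext k
    simp only [mem_Ioi, mem_insert, mem_map, Fin.coe_castSuccEmb]
    constructor
    · intro hk
      rcases Fin.eq_castSucc_or_eq_last k with ⟨k', rfl⟩ | rfl
      · exact Or.inr ⟨k', Fin.castSucc_lt_castSucc_iff.mp hk, rfl⟩
      · exact Or.inl rfl
    · rintro (rfl | ⟨k', hk', rfl⟩)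
      · exact Fin.castSucc_lt_last i
      · exact Fin.castSucc_lt_castSucc_iff.mpr hk'
  rw [hIoi, Finset.prod_insert, Finset.prod_map]
  · rw [mul_comm]; rfl
  · intro hmem
    obtain ⟨k', -, hk'⟩ := Finset.mem_map.mp hmem
    exact (Fin.castSucc_lt_last k').ne hk' 

section vanish
variable (α γ' : ℕ → ℂ) (x : Fin (n + 1) → ℕ) (z : Fin (n + 1) → ℂ)

lemma prod_Gt_eq_zero (hx : StrictMono x) (hxM : x (Fin.last n) = m + 1)
    (hz0 : z (Fin.last n) ≠ 0) (hγ : γ' (m + 1) = z (Fin.last n))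
    (σ : Equiv.Perm (Fin (n + 1))) (τ : Fin (n + 1) → Bool)
    (hbad : ¬(σ (Fin.last n) = Fin.last n ∧ τ (Fin.last n) = false)) :
    ∏ j, Gt (m + 1) α γ' x z τ j (σ j) = 0 := by
  set j₀ := σ.symm (Fin.last n) with hj₀
  have hσj₀ : σ j₀ = Fin.last n := σ.apply_symm_apply _
  refine Finset.prod_eq_zero (Finset.mem_univ j₀) ?_
  unfold Gt
  rw [hσj₀]
  by_cases hτ : τ (Fin.last n) = true
  · -- the third product vanishes at k = m+1
    apply mul_eq_zero_of_right
    refine Finset.prod_eq_zero (i := m + 1) (by simp [Finset.mem_Icc]) ?_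
    rw [hτ, if_pos rfl, hγ, mul_inv_cancel₀ hz0, sub_self]
  · -- τ last = false; then σ last ≠ last, so j₀ ≠ last and the second product vanishes
    have hτf : τ (Fin.last n) = false := by simpa using hτ
    have hσ : σ (Fin.last n) ≠ Fin.last n := fun h => hbad ⟨h, hτf⟩
    have hj : j₀ ≠ Fin.last n := by
      intro h
      exact hσ (h ▸ hσj₀)
    have hxj : x j₀ < m + 1 := by
      rw [← hxM]
      exact hx (lt_of_le_of_ne (Fin.le_last j₀) hj)
    apply mul_eq_zero_of_left
    apply mul_eq_zero_of_right
    refine Finset.prod_eq_zero (i := m + 1) (by simp [Finset.mem_Icc]; omega) ?_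
    rw [hτf, if_neg (by simp), hγ, mul_inv_cancel₀ hz0, sub_self]
end vanish

section terms
variable (α γ : ℕ → ℂ) (x : Fin (n + 1) → ℕ) (z : Fin (n + 1) → ℂ)

lemma Gt_last (hxM : x (Fin.last n) = m + 1) (τ : Fin (n + 1) → Bool)
    (hτ : τ (Fin.last n) = false) :
    Gt (m + 1) α (Function.update γ (m + 1) (z (Fin.last n))) x z τ
        (Fin.last n) (Fin.last n) =
      (∏ k ∈ Finset.range (m + 1), (α k + (1 - α k * γ k) * (z (Fin.last n))⁻¹)) *
        ((∏ k ∈ Finset.Icc 1 m, (1 - γ k * z (Fin.last n))) * (1 - z (Fin.last n) ^ 2)) := by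
  set w := z (Fin.last n) with hw
  set γ' := Function.update γ (m + 1) w with hγ'
  have hup : ∀ k, k ≠ m + 1 → γ' k = γ k := fun k hk => Function.update_of_ne hk _ γ
  unfold Gt
  rw [hxM]
  simp only [hτ, Bool.false_eq_true, if_false]
  have h1 : (∏ k ∈ Finset.range (m + 1), (α k + (1 - α k * γ' k) * w⁻¹)) =
      ∏ k ∈ Finset.range (m + 1), (α k + (1 - α k * γ k) * w⁻¹) :=
    Finset.prod_congr rfl fun k hk => by
      rw [hup k (by simp at hk; omega)]
  have h2 : (∏ k ∈ Finset.Icc (m + 1 + 1) (m + 1), (1 - γ' k * w⁻¹)) = 1 := by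
    rw [Finset.Icc_eq_empty (by omega), Finset.prod_empty]
  have h3 : (∏ k ∈ Finset.Icc 1 (m + 1), (1 - γ' k * w)) =
      (∏ k ∈ Finset.Icc 1 m, (1 - γ k * w)) * (1 - w ^ 2) := by
    rw [Finset.prod_Icc_succ_top (by omega : 1 ≤ m + 1)]
    have : γ' (m + 1) = w := Function.update_self _ _ _
    rw [this]
    congr 1
    · exact Finset.prod_congr rfl fun k hk => by
        rw [hup k (by simp [Finset.mem_Icc] at hk; omega)]
    · ring
  rw [h1, h2, h3]
  ring

lemma Gt_cast (hx : StrictMono x) (hz0 : ∀ j, z j ≠ 0)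
    (τ' : Fin n → Bool) (i s : Fin n) (hxi : x i.castSucc ≤ m) :
    Gt (m + 1) α (Function.update γ (m + 1) (z (Fin.last n))) x z (Fin.snoc τ' false)
        i.castSucc s.castSucc =
      Gt m α γ (fun i => x i.castSucc) (fun i => z i.castSucc) τ' i s *
        ((1 - z (Fin.last n) * z s.castSucc) * (1 - z (Fin.last n) * (z s.castSucc)⁻¹)) := by
  set w := z (Fin.last n) with hw
  set γ' := Function.update γ (m + 1) w with hγ'
  have hup : ∀ k, k ≠ m + 1 → γ' k = γ k := fun k hk => Function.update_of_ne hk _ γ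
  have hupm : γ' (m + 1) = w := Function.update_self _ _ _
  unfold Gt
  simp only [Fin.snoc_castSucc]
  set v : ℂ := if τ' s then z s.castSucc else (z s.castSucc)⁻¹ with hv
  set u : ℂ := if τ' s then (z s.castSucc)⁻¹ else z s.castSucc with hu
  have h1 : (∏ k ∈ Finset.range (x i.castSucc), (α k + (1 - α k * γ' k) * v)) =
      ∏ k ∈ Finset.range (x i.castSucc), (α k + (1 - α k * γ k) * v) :=
    Finset.prod_congr rfl fun k hk => by
      rw [hup k (by simp at hk; omega)]
  have h2 : (∏ k ∈ Finset.Icc (x i.castSucc + 1) (m + 1), (1 - γ' k * v)) =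
      (∏ k ∈ Finset.Icc (x i.castSucc + 1) m, (1 - γ k * v)) * (1 - w * v) := by
    rw [Finset.prod_Icc_succ_top (by omega : x i.castSucc + 1 ≤ m + 1), hupm]
    congr 1
    exact Finset.prod_congr rfl fun k hk => by
      rw [hup k (by simp [Finset.mem_Icc] at hk; omega)]
  have h3 : (∏ k ∈ Finset.Icc 1 (m + 1), (1 - γ' k * u)) =
      (∏ k ∈ Finset.Icc 1 m, (1 - γ k * u)) * (1 - w * u) := by
    rw [Finset.prod_Icc_succ_top (by omega : 1 ≤ m + 1), hupm]
    congr 1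
    exact Finset.prod_congr rfl fun k hk => by
      rw [hup k (by simp [Finset.mem_Icc] at hk; omega)]
  rw [h1, h2, h3]
  have hvu : (1 - w * v) * (1 - w * u) =
      (1 - w * z s.castSucc) * (1 - w * (z s.castSucc)⁻¹) := by
    rw [hv, hu]
    cases hτs : τ' s <;> simp only [Bool.false_eq_true, if_false, if_true] <;> ring
  calc (∏ k ∈ Finset.range (x i.castSucc), (α k + (1 - α k * γ k) * v)) *
        ((∏ k ∈ Finset.Icc (x i.castSucc + 1) m, (1 - γ k * v)) * (1 - w * v)) *
        ((∏ k ∈ Finset.Icc 1 m, (1 - γ k * u)) * (1 - w * u))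
      = ((∏ k ∈ Finset.range (x i.castSucc), (α k + (1 - α k * γ k) * v)) *
          (∏ k ∈ Finset.Icc (x i.castSucc + 1) m, (1 - γ k * v)) *
          (∏ k ∈ Finset.Icc 1 m, (1 - γ k * u))) * ((1 - w * v) * (1 - w * u)) := by ring
    _ = _ := by rw [hvu]

end terms

section reduction
variable (α γ : ℕ → ℂ) (x : Fin (n + 1) → ℕ) (z : Fin (n + 1) → ℂ)

lemma bigsum_red (hx : StrictMono x) (hxM : x (Fin.last n) = m + 1)
    (hz0 : ∀ j, z j ≠ 0) :
    bigsum (m + 1) α (Function.update γ (m + 1) (z (Fin.last n))) x z =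
      (-1) *
        (∏ i : Fin n, ((1 - z (Fin.last n) * z i.castSucc) *
          (1 - z (Fin.last n) * (z i.castSucc)⁻¹))) *
        (∏ k ∈ Finset.range (m + 1), (α k + (1 - α k * γ k) * (z (Fin.last n))⁻¹)) *
        (∏ k ∈ Finset.Icc 1 m, (1 - γ k * z (Fin.last n))) *
        (1 - z (Fin.last n) ^ 2) *
        bigsum m α γ (fun i => x i.castSucc) (fun i => z i.castSucc) := by
  classical
  set w := z (Fin.last n) with hw
  set γ' := Function.update γ (m + 1) w with hγ'
  have hγm : γ' (m + 1) = w := Function.update_self _ _ _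
  have hxi : ∀ i : Fin n, x i.castSucc ≤ m := by
    intro i
    have := hx (Fin.castSucc_lt_last i)
    omega
  unfold bigsum
  rw [sum_perm_fix_last _ (fun σ hσ => Finset.sum_eq_zero fun τ _ => by
    rw [prod_Gt_eq_zero α γ' x z hx hxM (hz0 _) hγm σ τ (fun h => hσ h.1), mul_zero])]
  have hstep : ∀ σ' : Equiv.Perm (Fin n),
      (∑ τ : Fin (n + 1) → Bool,
        ((Equiv.Perm.sign (pext σ') : ℤ) : ℂ) *
        (-1 : ℂ) ^ (Finset.univ.filter (fun j => τ j = false)).card *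
        ∏ j, Gt (m + 1) α γ' x z τ j (pext σ' j)) =
      ∑ τ' : Fin n → Bool,
        ((Equiv.Perm.sign σ' : ℤ) : ℂ) *
        (-(-1 : ℂ) ^ (Finset.univ.filter (fun j => τ' j = false)).card) *
        ((∏ j, Gt m α γ (fun i => x i.castSucc) (fun i => z i.castSucc) τ' j (σ' j)) *
          ((∏ i : Fin n, ((1 - w * z i.castSucc) * (1 - w * (z i.castSucc)⁻¹))) *
            ((∏ k ∈ Finset.range (m + 1), (α k + (1 - α k * γ k) * w⁻¹)) *
              ((∏ k ∈ Finset.Icc 1 m, (1 - γ k * w)) * (1 - w ^ 2))))) := by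
    intro σ'
    rw [sum_tau_fix_last _ (fun τ hτ => by
      rw [prod_Gt_eq_zero α γ' x z hx hxM (hz0 _) hγm (pext σ') τ
        (fun h => by rw [h.2] at hτ; exact Bool.false_ne_true hτ), mul_zero])]
    refine Finset.sum_congr rfl fun τ' _ => ?_
    rw [sign_pext, pow_card_snoc_false]
    congr 1
    rw [Fin.prod_univ_castSucc]
    simp only [pext_castSucc, pext_last]
    rw [Gt_last α γ x z hxM _ (Fin.snoc_last _ _)]
    have : (∏ i : Fin n, Gt (m + 1) α γ' x z (Fin.snoc τ' false) i.castSucc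
        ((σ' i).castSucc)) =
        (∏ i, Gt m α γ (fun i => x i.castSucc) (fun i => z i.castSucc) τ' i (σ' i)) *
          ∏ i, ((1 - w * z (σ' i).castSucc) * (1 - w * (z (σ' i).castSucc)⁻¹)) := by
      rw [← Finset.prod_mul_distrib]
      exact Finset.prod_congr rfl fun i _ =>
        Gt_cast α γ x z hx hz0 τ' i (σ' i) (hxi i)
    rw [this, Equiv.prod_comp σ'
      (fun s => (1 - w * z s.castSucc) * (1 - w * (z s.castSucc)⁻¹))]
    ring
  rw [Finset.sum_congr rfl fun σ' _ => hstep σ']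
  rw [Finset.mul_sum]
  refine Finset.sum_congr rfl fun σ' _ => ?_
  rw [Finset.mul_sum]
  refine Finset.sum_congr rfl fun τ' _ => ?_
  ring

end reduction

section final
variable (t : ℂ) (z : Fin (n + 1) → ℂ)

lemma pref_scalar (hz0 : ∀ j, z j ≠ 0) (hz1 : ∀ j, z j ^ 2 ≠ 1)
    (hzz : ∀ j k, j < k → z j * z k ≠ 1) (hzne : ∀ j k, j < k → z j ≠ z k) :
    pref t z * ((-1) *
        (∏ i : Fin n, ((1 - z (Fin.last n) * z i.castSucc) *
          (1 - z (Fin.last n) * (z i.castSucc)⁻¹))) *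
        (1 - z (Fin.last n) ^ 2)) =
      (∏ j, (t * z (Fin.last n) * z j + 1)) *
        (∏ i : Fin n, (t + z (Fin.last n) * (z i.castSucc)⁻¹)) *
        pref t (fun i : Fin n => z i.castSucc) := by
  set w := z (Fin.last n) with hw
  have hw0 : w ≠ 0 := hz0 _
  have hw2 : (1 : ℂ) - w ^ 2 ≠ 0 := sub_ne_zero.mpr (Ne.symm (hz1 _))
  have key : (∏ i : Fin n, ((1 + t * z i.castSucc * w) * (1 + t * z i.castSucc * w⁻¹))) *
      (∏ i : Fin n, ((1 - w * z i.castSucc) * (1 - w * (z i.castSucc)⁻¹))) =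
      (∏ i : Fin n, (t * w * z i.castSucc + 1)) *
        (∏ i : Fin n, (t + w * (z i.castSucc)⁻¹)) *
        (∏ i : Fin n, ((1 - z i.castSucc * w) * (z i.castSucc * w⁻¹ - 1))) := by
    rw [← Finset.prod_mul_distrib, ← Finset.prod_mul_distrib, ← Finset.prod_mul_distrib]
    refine Finset.prod_congr rfl fun i _ => ?_
    have hzi : z i.castSucc ≠ 0 := hz0 _
    field_simp
    ring
  have hD1 : (∏ i : Fin n, (1 - z i.castSucc ^ 2)) ≠ 0 :=
    Finset.prod_ne_zero_iff.mpr fun i _ => sub_ne_zero.mpr (Ne.symm (hz1 _))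
  have hDD : (∏ i : Fin n, ∏ k ∈ Ioi i,
      (1 - z i.castSucc * z k.castSucc) * (z i.castSucc * (z k.castSucc)⁻¹ - 1)) ≠ 0 := by
    refine Finset.prod_ne_zero_iff.mpr fun i _ => Finset.prod_ne_zero_iff.mpr fun k hk => ?_
    have hik : i.castSucc < k.castSucc := Fin.castSucc_lt_castSucc_iff.mpr (Finset.mem_Ioi.mp hk)
    refine mul_ne_zero (sub_ne_zero.mpr (Ne.symm (hzz _ _ hik))) ?_
    rw [sub_ne_zero, Ne, mul_inv_eq_one₀ (hz0 _)]
    exact hzne _ _ hik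
  have hF : (∏ i : Fin n, ((1 - z i.castSucc * w) * (z i.castSucc * w⁻¹ - 1))) ≠ 0 := by
    refine Finset.prod_ne_zero_iff.mpr fun i _ => ?_
    refine mul_ne_zero (sub_ne_zero.mpr (Ne.symm (hzz _ _ (Fin.castSucc_lt_last i)))) ?_
    rw [sub_ne_zero, Ne, mul_inv_eq_one₀ hw0]
    exact hzne _ _ (Fin.castSucc_lt_last i)
  have hm1 : ((-1 : ℂ) ^ (n + 1)) ≠ 0 := pow_ne_zero _ (neg_ne_zero.mpr one_ne_zero)
  have hm1' : ((-1 : ℂ) ^ n) ≠ 0 := pow_ne_zero _ (neg_ne_zero.mpr one_ne_zero)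
  unfold pref
  rw [prod_Ioi_split (fun j k => (1 + t * z j * z k) * (1 + t * z j * (z k)⁻¹)),
    prod_Ioi_split (fun j k => (1 - z j * z k) * (z j * (z k)⁻¹ - 1)),
    Fin.prod_univ_castSucc (f := fun j => 1 + t * z j ^ 2),
    Fin.prod_univ_castSucc (f := fun j => 1 - z j ^ 2),
    Fin.prod_univ_castSucc (f := fun j => t * w * z j + 1)]
  rw [div_mul_eq_mul_div, mul_div_assoc', div_eq_div_iff
    (by exact mul_ne_zero (mul_ne_zero hm1 (mul_ne_zero hD1 hw2)) (mul_ne_zero hDD hF))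
    (by exact mul_ne_zero (mul_ne_zero hm1' hD1) hDD)]
  linear_combination ((∏ i : Fin n, (1 + t * z i.castSucc ^ 2)) * (1 + t * w ^ 2) *
    (∏ i : Fin n, ∏ k ∈ Ioi i, (1 + t * z i.castSucc * z k.castSucc) *
      (1 + t * z i.castSucc * (z k.castSucc)⁻¹)) * (-1) * (1 - w ^ 2) * (-1 : ℂ) ^ n *
    (∏ i : Fin n, (1 - z i.castSucc ^ 2)) *
    (∏ i : Fin n, ∏ k ∈ Ioi i,
      (1 - z i.castSucc * z k.castSucc) * (z i.castSucc * (z k.castSucc)⁻¹ - 1))) * key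

end final

/-- Izergin–Korepin recursion, Property (3) for `x_N = M`, in the proof of
Theorem 4.7: the specialization `γ_M = z_N` of `F^I_{M,N}` factorizes through
`F^I_{M-1,N-1}`.  Here `M = m+1`, `N = n+1`, so `F^I_{M-1,N-1}` is `FI m` on the first `n`
variables/positions (interpreted as `1` when `n = 0`). -/
theorem FI_IzerginKorepin_recursion (m n : ℕ) (hmn : n ≤ m) (t : ℂ) (α γ : ℕ → ℂ)
    (x : Fin (n + 1) → ℕ) (hx : StrictMono x) (hx1 : ∀ j, 1 ≤ x j)
    (hxM : x (Fin.last n) = m + 1)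
    (z : Fin (n + 1) → ℂ) (hz0 : ∀ j, z j ≠ 0) (hz1 : ∀ j, z j ^ 2 ≠ 1)
    (hzz : ∀ j k, j < k → z j * z k ≠ 1) (hzne : ∀ j k, j < k → z j ≠ z k) :
    FI (m + 1) t α (Function.update γ (m + 1) (z (Fin.last n))) x z
      = (∏ j, (t * z (Fin.last n) * z j + 1)) *
        (∏ j : Fin n, (t + z (Fin.last n) * (z j.castSucc)⁻¹)) *
        (∏ j ∈ Finset.range (m + 1), ((1 - α j * γ j) * (z (Fin.last n))⁻¹ + α j)) *
        (∏ j ∈ Finset.Icc 1 m, (1 - γ j * z (Fin.last n))) *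
        FI m t α γ (fun j : Fin n => x j.castSucc) (fun j : Fin n => z j.castSucc) := by
  rw [FI_eq, FI_eq, bigsum_red α γ x z hx hxM hz0]
  have hA2 : (∏ j ∈ Finset.range (m + 1), ((1 - α j * γ j) * (z (Fin.last n))⁻¹ + α j)) =
      ∏ k ∈ Finset.range (m + 1), (α k + (1 - α k * γ k) * (z (Fin.last n))⁻¹) :=
    Finset.prod_congr rfl fun k _ => add_comm _ _
  rw [hA2]
  have hscalar := pref_scalar t z hz0 hz1 hzz hzne
  linear_combination ((∏ k ∈ Finset.range (m + 1),
      (α k + (1 - α k * γ k) * (z (Fin.last n))⁻¹)) *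
    (∏ k ∈ Finset.Icc 1 m, (1 - γ k * z (Fin.last n))) *
    bigsum m α γ (fun i => x i.castSucc) (fun i => z i.castSucc)) * hscalar
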